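/- arXiv:1606.02775 — 2 statements merged into one kernel-verified Lean document; each statement's English description precedes it below -/
import Mathlib

section
/- Fix real numbers μ and Δ with Δ ≥ 0. Let s and s′ be real numbers with s < μ, s′ < μ, (s−μ)² ≥ 2Δ and (s′−μ)² ≥ 2Δ, and set ρ = √((s−μ)² − 2Δ) and ρ′ = √((s′−μ)² − 2Δ). Then the closed disk of center (s,0) and radius ρ in ℝ² is contained in the closed disk of center (s′,0) and radius ρ′ if and only if s′ ≤ s. In particular, the numerical wall with center (s,0) is nested inside the numerical wall with center (s′,0) if and only if s > s′. -/
/-- Nesting of numerical walls: for fixed `μ` and `Δ ≥ 0`, the closed disk of center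
`(s,0)` and radius `ρ(s) = √((s−μ)² − 2Δ)` is contained in the one of center `(s',0)`
and radius `ρ(s')` if and only if `s' ≤ s` (for centers left of the vertical wall). -/
theorem walls_nested_iff_centers_ordered (μ Δ s s' : ℝ) (hΔ : 0 ≤ Δ)
    (hs : s < μ) (hs' : s' < μ)
    (h1 : 2 * Δ ≤ (s - μ) ^ 2) (h2 : 2 * Δ ≤ (s' - μ) ^ 2) :
    let ρ := Real.sqrt ((s - μ) ^ 2 - 2 * Δ)
    let ρ' := Real.sqrt ((s' - μ) ^ 2 - 2 * Δ)
    ({p : ℝ × ℝ | (p.1 - s) ^ 2 + p.2 ^ 2 ≤ ρ ^ 2}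
        ⊆ {p : ℝ × ℝ | (p.1 - s') ^ 2 + p.2 ^ 2 ≤ ρ' ^ 2})
      ↔ s' ≤ s := by
  intro ρ ρ'
  have hρsq : ρ ^ 2 = (s - μ) ^ 2 - 2 * Δ := Real.sq_sqrt (by linarith)
  have hρ'sq : ρ' ^ 2 = (s' - μ) ^ 2 - 2 * Δ := Real.sq_sqrt (by linarith)
  have hρ0 : 0 ≤ ρ := Real.sqrt_nonneg _
  have hρ'0 : 0 ≤ ρ' := Real.sqrt_nonneg _
  have hρle : ρ ≤ μ - s := by nlinarith
  have hρ'le : ρ' ≤ μ - s' := by nlinarith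
  constructor
  · intro h
    by_contra hlt
    push_neg at hlt
    have hmem : ((s - ρ, (0:ℝ)) : ℝ × ℝ) ∈
        {p : ℝ × ℝ | (p.1 - s) ^ 2 + p.2 ^ 2 ≤ ρ ^ 2} := by
      simp
    have := h hmem
    simp only [Set.mem_setOf_eq] at this
    nlinarith [sq_nonneg (s' - s), mul_pos (sub_pos.mpr hlt) (sub_pos.mpr hs')]
  · intro hle p hp
    simp only [Set.mem_setOf_eq] at hp ⊢
    have habs : p.1 - s ≤ ρ := by nlinarith [sq_nonneg p.2]
    nlinarith [mul_nonneg (sub_nonneg.mpr hle) (sub_nonneg.mpr habs),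
      mul_nonneg (sub_nonneg.mpr hle) (by linarith : (0:ℝ) ≤ μ - s - ρ),
      sq_nonneg (s - s')]
end

section
/- Fix real numbers μ and Δ with Δ ≥ 0, and let s ≠ s′ be real numbers. Then the two semicircles { (β,α) ∈ ℝ² : α > 0, (β−s)² + α² = (s−μ)² − 2Δ } and { (β,α) ∈ ℝ² : α > 0, (β−s′)² + α² = (s′−μ)² − 2Δ } are disjoint. That is, distinct numerical walls for a fixed positive-rank character never intersect in the upper half-plane. -/
/-- Distinct numerical walls for a fixed positive-rank character (fixed `μ`, `Δ ≥ 0`)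
never intersect in the upper half-plane. -/
theorem numerical_walls_disjoint (μ Δ s s' : ℝ) (hΔ : 0 ≤ Δ) (hss : s ≠ s') :
    Disjoint
      {p : ℝ × ℝ | 0 < p.2 ∧ (p.1 - s) ^ 2 + p.2 ^ 2 = (s - μ) ^ 2 - 2 * Δ}
      {p : ℝ × ℝ | 0 < p.2 ∧ (p.1 - s') ^ 2 + p.2 ^ 2 = (s' - μ) ^ 2 - 2 * Δ} := by
  rw [Set.disjoint_left]
  rintro p ⟨hα, h1⟩ ⟨_, h2⟩
  have hβ : (p.1 - μ) * (s' - s) = 0 := by nlinarith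
  have hs : s' - s ≠ 0 := sub_ne_zero.mpr (Ne.symm hss)
  have hpμ : p.1 = μ := by
    rcases mul_eq_zero.mp hβ with h | h
    · linarith [sub_eq_zero.mp h]
    · exact absurd h hs
  subst hpμ
  nlinarith [pow_pos hα 2]
end
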